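/- Let I be an interval of length L, let μ ≥ 1, let x_1,…,x_μ ∈ I, and let ψ_1,…,ψ_μ : I → ℝ be C^{μ-1} functions. Define Δ = det(ψ_i(x_j))_{1≤i,j≤μ} and σ_{i,p} = sup_{ξ∈I} |ψ_i^{(p)}(ξ)|/p!. Then |Δ| ≤ L^{μ(μ-1)/2} · ∑_{s ∈ S_μ} σ_{1,s(0)} σ_{2,s(1)} ⋯ σ_{μ,s(μ-1)}, where S_μ is the group of permutations of {0,…,μ-1}. -/

import Mathlib

open Polynomial Finset Set

private lemma BP.contDiff_polyEval (Q : Polynomial ℝ) {n : WithTop ℕ∞} :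
    ContDiff ℝ n fun t : ℝ => Q.eval t := by
  induction Q using Polynomial.induction_on' with
  | add p q hp hq => simpa [Polynomial.eval_add] using hp.add hq
  | monomial k c =>
      simpa [Polynomial.eval_monomial] using (contDiff_const (c := c)).mul (contDiff_id.pow k)

private lemma BP.iDW_polyEval {a b : ℝ} (hab : a < b) (n : ℕ) :
    ∀ (Q : Polynomial ℝ) {y : ℝ}, y ∈ Set.Icc a b →
      iteratedDerivWithin n (fun t => Q.eval t) (Set.Icc a b) y
        = (Polynomial.derivative^[n] Q).eval y := by
  induction n with
  | zero => intro Q y hy; simp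
  | succ n IH =>
    intro Q y hy
    have hs := uniqueDiffOn_Icc hab
    rw [iteratedDerivWithin_succ']
    have heq : Set.EqOn (derivWithin (fun t => Q.eval t) (Set.Icc a b))
        (fun t => (Polynomial.derivative Q).eval t) (Set.Icc a b) := fun t ht =>
      (Q.hasDerivAt t).hasDerivWithinAt.derivWithin (hs t ht)
    rw [iteratedDerivWithin_congr heq hy, IH _ hy, Function.iterate_succ_apply]


private lemma BP.rolle_finset {a b : ℝ} (hab : a < b) :
    ∀ (p : ℕ) (g : ℝ → ℝ), ContDiffOn ℝ p g (Set.Icc a b) →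
      ∀ t : Finset ℝ, t.card = p + 1 → ↑t ⊆ Set.Icc a b → (∀ u ∈ t, g u = 0) →
      ∃ ξ ∈ Set.Icc a b, iteratedDerivWithin p g (Set.Icc a b) ξ = 0 := by
  intro p
  induction p with
  | zero =>
    intro g hg t hcard hsub hzero
    obtain ⟨u, hu⟩ := Finset.card_eq_one.1 hcard
    exact ⟨u, hsub (by simp [hu]), by simpa using hzero u (by simp [hu])⟩
  | succ p IH =>
    intro g hg t hcard hsub hzero
    have hs := uniqueDiffOn_Icc hab
    set y := t.orderEmbOfFin hcard with hy
    have hymem : ∀ k, y k ∈ Set.Icc a b := fun k => hsub (t.orderEmbOfFin_mem hcard k)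
    have key : ∀ k : Fin (p + 1), ∃ c,
        c ∈ Set.Ioo (y k.castSucc) (y k.succ) ∧ derivWithin g (Set.Icc a b) c = 0 := by
      intro k
      have hlt : y k.castSucc < y k.succ := y.strictMono (Fin.castSucc_lt_succ : k.castSucc < k.succ)
      have hcont : ContinuousOn g (Set.Icc (y k.castSucc) (y k.succ)) :=
        hg.continuousOn.mono (Set.Icc_subset_Icc (hymem _).1 (hymem _).2)
      have heqv : g (y k.castSucc) = g (y k.succ) := by
        rw [hzero _ (t.orderEmbOfFin_mem hcard _), hzero _ (t.orderEmbOfFin_mem hcard _)]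
      have hderiv : ∀ u ∈ Set.Ioo (y k.castSucc) (y k.succ),
          HasDerivAt g (derivWithin g (Set.Icc a b) u) u := by
        intro u hu
        have humem : Set.Icc a b ∈ nhds u :=
          Icc_mem_nhds (lt_of_le_of_lt (hymem k.castSucc).1 hu.1)
            (lt_of_lt_of_le hu.2 (hymem k.succ).2)
        have hone : (1 : WithTop ℕ∞) ≤ ((p + 1 : ℕ) : WithTop ℕ∞) := by
          exact_mod_cast Nat.succ_le_succ (Nat.zero_le p)
        have hd : DifferentiableWithinAt ℝ g (Set.Icc a b) u :=
          hg.differentiableOn (by exact_mod_cast Nat.succ_ne_zero p) u (mem_of_mem_nhds humem)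
        have hda : DifferentiableAt ℝ g u := hd.differentiableAt humem
        rw [derivWithin_of_mem_nhds humem]
        exact hda.hasDerivAt
      obtain ⟨c, hc, hc0⟩ := exists_hasDerivAt_eq_zero hlt hcont heqv hderiv
      exact ⟨c, hc, hc0⟩
    choose z hz1 hz2 using key
    have hzmono : StrictMono z := by
      rw [Fin.strictMono_iff_lt_succ]
      intro i
      have h1 : z i.castSucc < y i.castSucc.succ := (hz1 i.castSucc).2
      have h2 : y i.succ.castSucc < z i.succ := (hz1 i.succ).1
      rw [Fin.succ_castSucc] at h1
      exact h1.trans h2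
    have hzmem : ∀ k, z k ∈ Set.Icc a b := fun k =>
      ⟨(hymem k.castSucc).1.trans (hz1 k).1.le, (hz1 k).2.le.trans (hymem k.succ).2⟩
    have hle : ((p : ℕ∞) : WithTop ℕ∞) + 1 ≤ ((p + 1 : ℕ) : WithTop ℕ∞) := by
      exact_mod_cast le_refl _
    have hcd : ContDiffOn ℝ p (derivWithin g (Set.Icc a b)) (Set.Icc a b) :=
      hg.derivWithin hs hle
    obtain ⟨ξ, hξ, h0⟩ := IH (derivWithin g (Set.Icc a b)) hcd (Finset.image z Finset.univ)
      (by rw [Finset.card_image_of_injective _ hzmono.injective]; simp)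
      (by intro u hu; simp only [Finset.coe_image, Set.mem_image] at hu
          obtain ⟨k, -, rfl⟩ := hu; exact hzmem k)
      (by intro u hu; simp only [Finset.mem_image] at hu
          obtain ⟨k, -, rfl⟩ := hu; exact hz2 k)
    exact ⟨ξ, hξ, by rwa [iteratedDerivWithin_succ']⟩

private lemma BP.dd_bound {a b : ℝ} (hab : a < b) (p : ℕ) (f : ℝ → ℝ)
    (hf : ContDiffOn ℝ p f (Set.Icc a b))
    (t : Finset ℝ) (hcard : t.card = p + 1) (hsub : ↑t ⊆ Set.Icc a b) :
    ∃ ξ ∈ Set.Icc a b,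
      ∑ u ∈ t, f u * (∏ v ∈ t.erase u, (u - v))⁻¹ =
        iteratedDerivWithin p f (Set.Icc a b) ξ / (p.factorial : ℝ) := by
  classical
  have hs := uniqueDiffOn_Icc hab
  have hinj : Set.InjOn (id : ℝ → ℝ) ↑t := Function.injective_id.injOn
  set Q : Polynomial ℝ := Lagrange.interpolate t id f with hQ
  have hQnd : Q.natDegree ≤ p := by
    have h := Lagrange.degree_interpolate_le (r := f) hinj
    rw [hcard] at h
    exact Polynomial.natDegree_le_iff_degree_le.2 (by rw [hQ]; simpa using h)
  have hcoeff : Q.coeff p = ∑ u ∈ t, f u * (∏ v ∈ t.erase u, (u - v))⁻¹ := by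
    rw [hQ, Lagrange.interpolate_apply, Polynomial.finset_sum_coeff]
    refine Finset.sum_congr rfl fun u hu => ?_
    rw [Polynomial.coeff_C_mul]
    congr 1
    have hnd : (Lagrange.basis t id u).natDegree = p := by
      rw [Lagrange.natDegree_basis hinj hu, hcard]; omega
    have hlc : (Lagrange.basis t id u).coeff p = (Lagrange.basis t id u).leadingCoeff := by
      rw [Polynomial.leadingCoeff, hnd]
    rw [hlc, Lagrange.basis, Polynomial.leadingCoeff_prod, ← Finset.prod_inv_distrib]
    refine Finset.prod_congr rfl fun v hv => ?_
    rw [Lagrange.basisDivisor, Polynomial.leadingCoeff_mul, Polynomial.leadingCoeff_C,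
      Polynomial.leadingCoeff_X_sub_C, mul_one]
    rfl
  have hiter : Polynomial.derivative^[p] Q = Polynomial.C ((p.factorial : ℝ) * Q.coeff p) := by
    ext m
    rw [Polynomial.coeff_iterate_derivative]
    cases m with
    | zero => simp [Nat.descFactorial_self, nsmul_eq_mul]
    | succ m =>
      rw [Polynomial.coeff_eq_zero_of_natDegree_lt (lt_of_le_of_lt hQnd (by omega)),
        Polynomial.coeff_C]
      simp
  set g : ℝ → ℝ := f - fun u => Q.eval u with hg
  have hQcd : ContDiffOn ℝ p (fun u : ℝ => Q.eval u) (Set.Icc a b) :=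
    (BP.contDiff_polyEval Q).contDiffOn
  have hgcd : ContDiffOn ℝ p g (Set.Icc a b) := hf.sub hQcd
  have hzero : ∀ u ∈ t, g u = 0 := by
    intro u hu
    have h := Lagrange.eval_interpolate_at_node f hinj hu
    rw [← hQ] at h
    simp only [hg, Pi.sub_apply, id] at h ⊢
    rw [h, sub_self]
  obtain ⟨ξ, hξ, h0⟩ := BP.rolle_finset hab p g hgcd t hcard hsub hzero
  have hsplit : iteratedDerivWithin p g (Set.Icc a b) ξ =
      iteratedDerivWithin p f (Set.Icc a b) ξ
        - iteratedDerivWithin p (fun u => Q.eval u) (Set.Icc a b) ξ :=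
    iteratedDerivWithin_sub hξ hs (hf ξ hξ) (hQcd ξ hξ)
  have hQval : iteratedDerivWithin p (fun u : ℝ => Q.eval u) (Set.Icc a b) ξ
      = (p.factorial : ℝ) * Q.coeff p := by
    rw [BP.iDW_polyEval hab p Q hξ, hiter, Polynomial.eval_C]
  have hfact : (p.factorial : ℝ) ≠ 0 := Nat.cast_ne_zero.2 p.factorial_ne_zero
  refine ⟨ξ, hξ, ?_⟩
  rw [← hcoeff, eq_div_iff hfact]
  rw [h0, hQval] at hsplit
  linarith

private lemma BP.core (μ : ℕ) (a L : ℝ) (hL : 0 < L) (ψ : Fin μ → ℝ → ℝ)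
    (hψ : ∀ i, ContDiffOn ℝ (μ - 1 : ℕ) (ψ i) (Set.Icc a (a + L)))
    (x : Fin μ → ℝ) (hx : ∀ j, x j ∈ Set.Icc a (a + L)) (hmono : StrictMono x)
    (σ : Fin μ → ℕ → ℝ)
    (hσ : ∀ i (p : ℕ) (ξ : ℝ), ξ ∈ Set.Icc a (a + L) →
      |iteratedDerivWithin p (ψ i) (Set.Icc a (a + L)) ξ| / (p.factorial : ℝ) ≤ σ i p) :
    |Matrix.det (Matrix.of fun i j => ψ i (x j))| ≤
      L ^ (μ * (μ - 1) / 2) * ∑ s : Equiv.Perm (Fin μ), ∏ i : Fin μ, σ i (s i) := by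
  classical
  have hab : a < a + L := by linarith
  set S := Set.Icc a (a + L) with hS
  set M : Matrix (Fin μ) (Fin μ) ℝ := Matrix.of fun i j =>
    ∑ k ∈ Finset.Iic j, ψ i (x k) * (∏ l ∈ (Finset.Iic j).erase k, (x k - x l))⁻¹ with hM
  have hMbound : ∀ i j, |M i j| ≤ σ i (j : ℕ) := by
    intro i j
    have hle : ((j : ℕ) : WithTop ℕ∞) ≤ ((μ - 1 : ℕ) : WithTop ℕ∞) := by
      have : (j : ℕ) ≤ μ - 1 := by have := j.isLt; omega
      exact_mod_cast this
    have hcd : ContDiffOn ℝ (j : ℕ) (ψ i) S := (hψ i).of_le hle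
    set t : Finset ℝ := (Finset.Iic j).image x with ht
    have hcards : t.card = (j : ℕ) + 1 := by
      rw [ht, Finset.card_image_of_injective _ hmono.injective, Fin.card_Iic]
    have hsubt : ↑t ⊆ S := by
      intro u hu
      simp only [ht, Finset.coe_image, Set.mem_image] at hu
      obtain ⟨k, -, rfl⟩ := hu
      exact hx k
    obtain ⟨ξ, hξ, heq⟩ := BP.dd_bound hab (j : ℕ) (ψ i) hcd t hcards hsubt
    have hMeq : M i j = ∑ u ∈ t, ψ i u * (∏ v ∈ t.erase u, (u - v))⁻¹ := by
      rw [ht, Finset.sum_image (fun k _ l _ h => hmono.injective h)]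
      simp only [hM, Matrix.of_apply]
      refine Finset.sum_congr rfl fun k hk => ?_
      rw [← Finset.image_erase hmono.injective,
        Finset.prod_image (fun k2 _ l _ h => hmono.injective h)]
    rw [hMeq, heq, abs_div, Nat.abs_cast]
    exact hσ i _ ξ hξ
  set C : Matrix (Fin μ) (Fin μ) ℝ := Matrix.of fun k j =>
    if k ≤ j then (∏ l ∈ (Finset.Iic j).erase k, (x k - x l))⁻¹ else 0 with hC
  have hMC : M = (Matrix.of fun i j => ψ i (x j)) * C := by
    ext i j
    rw [Matrix.mul_apply]
    simp only [hM, hC, Matrix.of_apply]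
    rw [← Finset.sum_subset (Finset.subset_univ (Finset.Iic j))
      (fun k _ hk => by rw [if_neg (by simpa using hk), mul_zero])]
    exact Finset.sum_congr rfl fun k hk => by rw [if_pos (Finset.mem_Iic.1 hk)]
  have htri : C.BlockTriangular id := by
    intro k j h
    simp only [hC, Matrix.of_apply]
    exact if_neg (not_le.2 h)
  have hdetC : C.det = ∏ j : Fin μ, (∏ l ∈ Finset.Iio j, (x j - x l))⁻¹ := by
    rw [Matrix.det_of_upperTriangular htri]
    refine Finset.prod_congr rfl fun j _ => ?_
    simp only [hC, Matrix.of_apply, if_pos (le_refl j), Finset.Iic_erase]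
  set V := ∏ j : Fin μ, ∏ l ∈ Finset.Iio j, (x j - x l) with hV
  have hVpos : 0 < V :=
    Finset.prod_pos fun j _ => Finset.prod_pos fun l hl =>
      sub_pos.2 (hmono (Finset.mem_Iio.1 hl))
  have hdetC' : C.det = V⁻¹ := by rw [hdetC, Finset.prod_inv_distrib]
  have hdetA : Matrix.det (Matrix.of fun i j => ψ i (x j)) = M.det * V := by
    have h := congrArg Matrix.det hMC
    rw [Matrix.det_mul, hdetC'] at h
    rw [h]
    field_simp
  have hσ0 : ∀ i p, 0 ≤ σ i p := fun i p =>
    le_trans (div_nonneg (abs_nonneg _) (Nat.cast_nonneg _))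
      (hσ i p a (Set.left_mem_Icc.2 hab.le))
  have hdetM : |M.det| ≤ ∑ s : Equiv.Perm (Fin μ), ∏ i : Fin μ, σ i (s i) := by
    rw [← Matrix.det_transpose, Matrix.det_apply]
    refine le_trans (Finset.abs_sum_le_sum_abs _ _) ?_
    refine Finset.sum_le_sum fun s _ => ?_
    have habs : |Equiv.Perm.sign s • ∏ i : Fin μ, M.transpose (s i) i|
        = |∏ i : Fin μ, M i (s i)| := by
      rcases Int.units_eq_one_or (Equiv.Perm.sign s) with h | h <;>
        simp [h, Matrix.transpose_apply, Units.smul_def]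
    rw [habs, Finset.abs_prod]
    exact Finset.prod_le_prod (fun i _ => abs_nonneg _) (fun i _ => hMbound i (s i))
  have hVle : V ≤ L ^ (μ * (μ - 1) / 2) := by
    have h1 : V ≤ ∏ j : Fin μ, ∏ _l ∈ Finset.Iio j, L := by
      refine Finset.prod_le_prod
        (fun j _ => Finset.prod_nonneg fun l hl =>
          sub_nonneg.2 (hmono (Finset.mem_Iio.1 hl)).le)
        (fun j _ => Finset.prod_le_prod
          (fun l hl => sub_nonneg.2 (hmono (Finset.mem_Iio.1 hl)).le)
          (fun l _ => by
            have h2 := (hx j).2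
            have h3 := (hx l).1
            linarith))
    refine h1.trans (le_of_eq ?_)
    simp only [Finset.prod_const, Fin.card_Iio]
    rw [Finset.prod_pow_eq_pow_sum]
    congr 1
    rw [Fin.sum_univ_eq_sum_range (fun i => i) μ, Finset.sum_range_id]
  have hSnn : 0 ≤ ∑ s : Equiv.Perm (Fin μ), ∏ i : Fin μ, σ i (s i) :=
    Finset.sum_nonneg fun s _ => Finset.prod_nonneg fun i _ => hσ0 _ _
  rw [hdetA, abs_mul, abs_of_pos hVpos]
  calc |M.det| * V ≤ (∑ s : Equiv.Perm (Fin μ), ∏ i : Fin μ, σ i (s i))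
        * L ^ (μ * (μ - 1) / 2) := mul_le_mul hdetM hVle hVpos.le hSnn
    _ = _ := mul_comm _ _

/-- Bombieri–Pila determinant bound: if `I = [a, a+L]` is an interval of length `L`,
`x_1, …, x_μ ∈ I`, and `ψ_1, …, ψ_μ : I → ℝ` are `C^{μ-1}`, then the determinant
`Δ = det (ψ i (x j))` satisfies
`|Δ| ≤ L^(μ(μ-1)/2) * ∑_{s ∈ S_μ} ∏_i σ_{i, s(i)}`,
where `σ i p` is any bound on `sup_{ξ ∈ I} |ψ_i^{(p)}(ξ)| / p!`. -/
theorem det_le_of_contDiffOn (μ : ℕ) (hμ : 1 ≤ μ) (a L : ℝ) (hL : 0 ≤ L)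
    (ψ : Fin μ → ℝ → ℝ)
    (hψ : ∀ i, ContDiffOn ℝ (μ - 1 : ℕ) (ψ i) (Set.Icc a (a + L)))
    (x : Fin μ → ℝ) (hx : ∀ j, x j ∈ Set.Icc a (a + L))
    (σ : Fin μ → ℕ → ℝ)
    (hσ : ∀ i (p : ℕ) (ξ : ℝ), ξ ∈ Set.Icc a (a + L) →
      |iteratedDerivWithin p (ψ i) (Set.Icc a (a + L)) ξ| / (p.factorial : ℝ) ≤ σ i p) :
    |Matrix.det (Matrix.of fun i j => ψ i (x j))| ≤
      L ^ (μ * (μ - 1) / 2) *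
        ∑ s : Equiv.Perm (Fin μ), ∏ i : Fin μ, σ i (s i) := by
  classical
  have ha : a ∈ Set.Icc a (a + L) := Set.left_mem_Icc.2 (by linarith)
  have hσ0 : ∀ i p, 0 ≤ σ i p := fun i p =>
    le_trans (div_nonneg (abs_nonneg _) (Nat.cast_nonneg _)) (hσ i p a ha)
  have hSnn : 0 ≤ ∑ s : Equiv.Perm (Fin μ), ∏ i : Fin μ, σ i (s i) :=
    Finset.sum_nonneg fun s _ => Finset.prod_nonneg fun i _ => hσ0 _ _
  rcases eq_or_lt_of_le hμ with hμ1 | hμ2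
  · -- μ = 1
    rcases hμ1 with rfl
    rw [Matrix.det_fin_one]
    have hsum : ∑ s : Equiv.Perm (Fin 1), ∏ i : Fin 1, σ i (s i) = σ 0 0 := by
      simp [Finset.univ_unique]
    rw [hsum]
    have h := hσ 0 0 (x 0) (hx 0)
    simpa using h
  · by_cases hinj : Function.Injective x
    · -- injective case: L must be positive, sort and apply the core lemma
      have hLpos : 0 < L := by
        rcases hL.lt_or_eq with h | h
        · exact h
        · exfalso
          have h0 : ∀ j, x j = a := by
            intro j
            have h1 := (hx j).1
            have h2 := (hx j).2
            have : L = 0 := h.symm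
            linarith [h1, h2]
          have hne : (⟨0, by omega⟩ : Fin μ) ≠ ⟨1, by omega⟩ := by
            simp [Fin.ext_iff]
          exact hne (hinj (by rw [h0, h0]))
      set τ := Tuple.sort x with hτ
      have hxs : StrictMono (x ∘ τ) :=
        (Tuple.monotone_sort x).strictMono_of_injective (hinj.comp τ.injective)
      have hbound := BP.core μ a L hLpos ψ hψ (x ∘ τ) (fun j => hx (τ j)) hxs σ hσ
      have hdeteq : |Matrix.det (Matrix.of fun i j => ψ i ((x ∘ τ) j))|
          = |Matrix.det (Matrix.of fun i j => ψ i (x j))| := by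
        have h1 : (Matrix.of fun i j => ψ i ((x ∘ τ) j))
            = (Matrix.of fun i j => ψ i (x j)).submatrix id τ := rfl
        rw [h1, Matrix.det_permute']
        rcases Int.units_eq_one_or (Equiv.Perm.sign τ) with h | h <;> simp [h]
      rw [← hdeteq]
      exact hbound
    · -- non-injective: determinant vanishes
      obtain ⟨j, k, heq, hne⟩ := Function.not_injective_iff.1 hinj
      have hdet0 : Matrix.det (Matrix.of fun i j => ψ i (x j)) = 0 :=
        Matrix.det_zero_of_column_eq hne (fun i => by simp [heq])
      rw [hdet0, abs_zero]
      exact mul_nonneg (pow_nonneg hL _) hSnn
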